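/- For every positive integer $i$, $\sum_{k=1}^{\infty} \frac{H_k^{(2)}}{k(i+k)} = \frac{\zeta(3)}{i} - \frac{\zeta(2)}{i^2} + \frac{\zeta(2) H_i}{i} - \frac{1}{i}\sum_{k=1}^{i-1} \frac{H_k}{k^2}$. -/

import Mathlib

open scoped BigOperators
open Filter Topology Finset

noncomputable def H (k : ℕ) : ℝ := ∑ i ∈ Finset.Icc 1 k, (1 : ℝ) / i
noncomputable def Hp (n k : ℕ) : ℝ := ∑ i ∈ Finset.Icc 1 k, (1 : ℝ) / (i : ℝ) ^ n
noncomputable def oh (n k : ℕ) : ℝ := ∑ i ∈ Finset.Icc 1 k, (1 : ℝ) / (2 * (i : ℝ) - 1) ^ n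
noncomputable def Li (n : ℕ) (x : ℝ) : ℝ := ∑' m : ℕ, x ^ (m + 1) / ((m : ℝ) + 1) ^ n

noncomputable def P2 : ℝ := ∑' n : ℕ, 1 / ((n : ℝ) + 1) ^ 2
noncomputable def P3 : ℝ := ∑' n : ℕ, 1 / ((n : ℝ) + 1) ^ 3

lemma summable_shift (p : ℕ) (hp : 1 < p) : Summable (fun n : ℕ => 1 / ((n : ℝ) + 1) ^ p) := by
  have h := (Real.summable_one_div_nat_pow (p := p)).mpr hp
  have := (summable_nat_add_iff (f := fun n : ℕ => 1 / (n : ℝ) ^ p) 1).mpr h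
  exact this.congr (by intro n; push_cast; ring_nf)

lemma hasSum_P2 : HasSum (fun n : ℕ => 1 / ((n : ℝ) + 1) ^ 2) P2 :=
  (summable_shift 2 one_lt_two).hasSum

lemma hasSum_P3 : HasSum (fun n : ℕ => 1 / ((n : ℝ) + 1) ^ 3) P3 :=
  (summable_shift 3 (by norm_num)).hasSum

lemma H_succ (k : ℕ) : H (k + 1) = H k + 1 / ((k : ℝ) + 1) := by
  rw [H, H, Finset.sum_Icc_succ_top (Nat.succ_le_succ (Nat.zero_le k))]
  push_cast; ring

lemma Hp2_succ (k : ℕ) : Hp 2 (k + 1) = Hp 2 k + 1 / ((k : ℝ) + 1) ^ 2 := by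
  rw [Hp, Hp, Finset.sum_Icc_succ_top (Nat.succ_le_succ (Nat.zero_le k))]
  push_cast; ring

lemma Hp2_nonneg (k : ℕ) : 0 ≤ Hp 2 k :=
  Finset.sum_nonneg fun i _ => by positivity

lemma H_eq_sum_range (k : ℕ) : H k = ∑ j ∈ Finset.range k, 1 / ((j : ℝ) + 1) := by
  induction k with
  | zero => simp [H]
  | succ n ih => rw [H_succ, ih, Finset.sum_range_succ]

lemma Hp2_eq_sum_range (k : ℕ) : Hp 2 k = ∑ j ∈ Finset.range k, 1 / ((j : ℝ) + 1) ^ 2 := by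
  induction k with
  | zero => simp [Hp]
  | succ n ih => rw [Hp2_succ, ih, Finset.sum_range_succ]

lemma Hp2_le_P2 (k : ℕ) : Hp 2 k ≤ P2 := by
  rw [Hp2_eq_sum_range]
  exact Summable.sum_le_tsum _ (fun i _ => by positivity) hasSum_P2.summable

lemma tendsto_inv_shift (c : ℝ) : Tendsto (fun n : ℕ => 1 / ((n : ℝ) + c)) atTop (𝓝 0) := by
  have h : Tendsto (fun n : ℕ => (n : ℝ) + c) atTop atTop :=
    tendsto_atTop_add_const_right _ c tendsto_natCast_atTop_atTop
  simpa [one_div, Pi.inv_def] using h.inv_tendsto_atTop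

lemma hasSum_G (i : ℕ) (hi : 0 < i) :
    HasSum (fun k : ℕ => 1 / ((k : ℝ) + 1) - 1 / ((k : ℝ) + 1 + i)) (H i) := by
  have key : ∀ N : ℕ, ∑ k ∈ Finset.range N, (1 / ((k : ℝ) + 1) - 1 / ((k : ℝ) + 1 + i))
      = ∑ r ∈ Finset.range i, (1 / ((r : ℝ) + 1) - 1 / ((N : ℝ) + (r : ℝ) + 1)) := by
    intro N
    induction N with
    | zero => simp
    | succ n ih =>
      rw [Finset.sum_range_succ, ih]
      have tele : ∑ r ∈ Finset.range i, 1 / ((n : ℝ) + (r : ℝ) + 1)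
          - ∑ r ∈ Finset.range i, 1 / ((n : ℝ) + ((r : ℝ) + 1) + 1)
          = 1 / ((n : ℝ) + 1) - 1 / ((n : ℝ) + (i : ℝ) + 1) := by
        have h := Finset.sum_range_sub' (f := fun r : ℕ => 1 / ((n : ℝ) + (r : ℝ) + 1)) i
        rw [← Finset.sum_sub_distrib]
        simpa using h
      have e1 : ∑ r ∈ Finset.range i, 1 / ((n : ℝ) + 1 + (r : ℝ) + 1)
          = ∑ r ∈ Finset.range i, 1 / ((n : ℝ) + ((r : ℝ) + 1) + 1) :=
        Finset.sum_congr rfl fun r _ => by ring_nf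
      push_cast
      simp only [Finset.sum_sub_distrib]
      rw [e1]
      have e2 : 1 / ((n : ℝ) + 1 + (i : ℝ)) = 1 / ((n : ℝ) + (i : ℝ) + 1) := by ring_nf
      linarith [tele, e2]
  rw [hasSum_iff_tendsto_nat_of_nonneg]
  · have h1 : Tendsto (fun N : ℕ => ∑ r ∈ Finset.range i,
        (1 / ((r : ℝ) + 1) - 1 / ((N : ℝ) + (r : ℝ) + 1))) atTop (𝓝 (H i)) := by
      have h2 : Tendsto (fun N : ℕ => ∑ r ∈ Finset.range i, 1 / ((N : ℝ) + (r : ℝ) + 1))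
          atTop (𝓝 0) := by
        have := tendsto_finset_sum (Finset.range i)
          (fun r _ => tendsto_inv_shift ((r : ℝ) + 1))
        simpa [add_assoc] using this
      have h3 : Tendsto (fun _ : ℕ => ∑ r ∈ Finset.range i, 1 / ((r : ℝ) + 1))
          atTop (𝓝 (H i)) := by
        rw [H_eq_sum_range]; exact tendsto_const_nhds
      simpa [Finset.sum_sub_distrib] using h3.sub h2
    exact (tendsto_congr fun N => (key N).symm).mp h1
  · intro k
    have hk1 : (0 : ℝ) < (k : ℝ) + 1 := by positivity
    have : 1 / ((k : ℝ) + 1 + i) ≤ 1 / ((k : ℝ) + 1) := by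
      apply one_div_le_one_div_of_le hk1
      simp [Nat.cast_nonneg]
    linarith

lemma hasSum_W (i : ℕ) (hi : 0 < i) :
    HasSum (fun k : ℕ => 1 / (((k : ℝ) + 1) ^ 2 * ((k : ℝ) + 1 + i)))
      (P2 / i - H i / (i : ℝ) ^ 2) := by
  have hi' : (0 : ℝ) < i := by exact_mod_cast hi
  have h := (hasSum_P2.mul_left (1 / (i : ℝ))).sub ((hasSum_G i hi).mul_left (1 / (i : ℝ) ^ 2))
  have hfun : (fun k : ℕ => (1 / (i : ℝ)) * (1 / ((k : ℝ) + 1) ^ 2)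
      - (1 / (i : ℝ) ^ 2) * (1 / ((k : ℝ) + 1) - 1 / ((k : ℝ) + 1 + i)))
      = fun k : ℕ => 1 / (((k : ℝ) + 1) ^ 2 * ((k : ℝ) + 1 + i)) := by
    funext k
    have h1 : ((k : ℝ) + 1) ≠ 0 := by positivity
    have h2 : ((k : ℝ) + 1 + i) ≠ 0 := by positivity
    field_simp
    ring
  rw [hfun] at h
  have hval : (1 / (i : ℝ)) * P2 - (1 / (i : ℝ) ^ 2) * H i = P2 / i - H i / (i : ℝ) ^ 2 := by
    field_simp
  rwa [hval] at h

lemma hasSum_V (i : ℕ) (hi : 0 < i) :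
    HasSum (fun k : ℕ => Hp 2 (k + 1) / (((k : ℝ) + 1 + i) * ((k : ℝ) + 2 + i)))
      (P2 / i - H i / (i : ℝ) ^ 2) := by
  have key : ∀ N : ℕ, ∑ k ∈ Finset.range N,
      Hp 2 (k + 1) / (((k : ℝ) + 1 + i) * ((k : ℝ) + 2 + i))
      = ∑ k ∈ Finset.range N, 1 / (((k : ℝ) + 1) ^ 2 * ((k : ℝ) + 1 + i))
        - Hp 2 N / ((N : ℝ) + 1 + i) := by
    intro N
    induction N with
    | zero => simp [Hp]
    | succ n ih =>
      rw [Finset.sum_range_succ, Finset.sum_range_succ, ih]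
      have h1 : ((n : ℝ) + 1) ≠ 0 := by positivity
      have h2 : ((n : ℝ) + 1 + i) ≠ 0 := by positivity
      have h3 : ((n : ℝ) + 2 + i) ≠ 0 := by positivity
      have h4 : ((n : ℝ) + 1 + 1 + i) = ((n : ℝ) + 2 + i) := by ring
      push_cast
      rw [h4, Hp2_succ]
      field_simp
      ring
  rw [hasSum_iff_tendsto_nat_of_nonneg]
  · have hW := (hasSum_W i hi).tendsto_sum_nat
    have hd : Tendsto (fun N : ℕ => Hp 2 N / ((N : ℝ) + 1 + i)) atTop (𝓝 0) := by
      apply squeeze_zero (fun N => div_nonneg (Hp2_nonneg N) (by positivity))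
        (g := fun N : ℕ => P2 * (1 / ((N : ℝ) + (1 + i))))
      · intro N
        have h2 : (0 : ℝ) < (N : ℝ) + 1 + i := by positivity
        have e : P2 * (1 / ((N : ℝ) + (1 + i))) = P2 / ((N : ℝ) + 1 + i) := by
          rw [mul_one_div]; ring_nf
        rw [e]
        gcongr
        exact Hp2_le_P2 N
      · simpa using (tendsto_inv_shift (1 + (i : ℝ))).const_mul P2
    have := hW.sub hd
    rw [sub_zero] at this
    exact (tendsto_congr fun N => (key N).symm).mp this
  · intro k; exact div_nonneg (Hp2_nonneg _) (by positivity)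

lemma hasSum_T1 :
    HasSum (fun k : ℕ => Hp 2 (k + 1) / (((k : ℝ) + 1) * ((k : ℝ) + 2))) P3 := by
  have key : ∀ N : ℕ, ∑ k ∈ Finset.range N, Hp 2 (k + 1) / (((k : ℝ) + 1) * ((k : ℝ) + 2))
      = ∑ k ∈ Finset.range N, 1 / ((k : ℝ) + 1) ^ 3 - Hp 2 N / ((N : ℝ) + 1) := by
    intro N
    induction N with
    | zero => simp [Hp]
    | succ n ih =>
      rw [Finset.sum_range_succ, Finset.sum_range_succ, ih]
      have h1 : ((n : ℝ) + 1) ≠ 0 := by positivity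
      have h2 : ((n : ℝ) + 2) ≠ 0 := by positivity
      push_cast
      rw [Hp2_succ]
      field_simp
      ring
  rw [hasSum_iff_tendsto_nat_of_nonneg]
  · have hW := hasSum_P3.tendsto_sum_nat
    have hd : Tendsto (fun N : ℕ => Hp 2 N / ((N : ℝ) + 1)) atTop (𝓝 0) := by
      apply squeeze_zero (fun N => div_nonneg (Hp2_nonneg N) (by positivity))
        (g := fun N : ℕ => P2 * (1 / ((N : ℝ) + 1)))
      · intro N
        rw [mul_one_div]
        gcongr
        exact Hp2_le_P2 N
      · simpa using (tendsto_inv_shift (1 : ℝ)).const_mul P2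
    have := hW.sub hd
    rw [sub_zero] at this
    exact (tendsto_congr fun N => (key N).symm).mp this
  · intro k; exact div_nonneg (Hp2_nonneg _) (by positivity)

lemma hasSum_main (i : ℕ) (hi : 0 < i) :
    HasSum (fun k : ℕ => Hp 2 (k + 1) / (((k : ℝ) + 1) * ((k : ℝ) + 1 + i)))
      (P3 / i - P2 / (i : ℝ) ^ 2 + P2 * H i / i
        - (1 / (i : ℝ)) * ∑ k ∈ Finset.Icc 1 (i - 1), H k / (k : ℝ) ^ 2) := by
  induction i, hi using Nat.le_induction with
  | base =>
    have h1 : H 1 = 1 := by simp [H]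
    have h2 : (fun k : ℕ => Hp 2 (k + 1) / (((k : ℝ) + 1) * ((k : ℝ) + 2)))
        = fun k : ℕ => Hp 2 (k + 1) / (((k : ℝ) + 1) * ((k : ℝ) + 1 + (1 : ℕ))) := by
      funext k; norm_num; ring_nf
    have h := hasSum_T1
    rw [h2] at h
    simpa [h1] using h
  | succ i hi ih =>
    have hi' : (0 : ℝ) < i := by exact_mod_cast hi
    have h := ((ih.mul_left (i : ℝ)).add (hasSum_V i hi)).div_const ((i : ℝ) + 1)
    have hfun : (fun k : ℕ => ((i : ℝ) * (Hp 2 (k + 1) / (((k : ℝ) + 1) * ((k : ℝ) + 1 + i)))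
        + Hp 2 (k + 1) / (((k : ℝ) + 1 + i) * ((k : ℝ) + 2 + i))) / ((i : ℝ) + 1))
        = fun k : ℕ => Hp 2 (k + 1) / (((k : ℝ) + 1) * ((k : ℝ) + 1 + (i + 1 : ℕ))) := by
      funext k
      have h1 : ((k : ℝ) + 1) ≠ 0 := by positivity
      have h2 : ((k : ℝ) + 1 + i) ≠ 0 := by positivity
      have h3 : ((k : ℝ) + 2 + i) ≠ 0 := by positivity
      have h4 : ((i : ℝ) + 1) ≠ 0 := by positivity
      push_cast
      have h5 : ((k : ℝ) + 1 + (i + 1)) = ((k : ℝ) + 2 + i) := by ring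
      rw [h5]
      field_simp
      ring
    rw [hfun] at h
    have hs : ∑ k ∈ Finset.Icc 1 i, H k / (k : ℝ) ^ 2
        = ∑ k ∈ Finset.Icc 1 (i - 1), H k / (k : ℝ) ^ 2 + H i / (i : ℝ) ^ 2 := by
      conv_lhs => rw [show i = (i - 1) + 1 from (Nat.succ_pred_eq_of_pos hi).symm]
      rw [Finset.sum_Icc_succ_top (Nat.succ_le_succ (Nat.zero_le _))]
      rw [show i - 1 + 1 = i from by omega]
    have hH : H (i + 1) = H i + 1 / ((i : ℝ) + 1) := H_succ i
    have hval : ((i : ℝ) * (P3 / i - P2 / (i : ℝ) ^ 2 + P2 * H i / i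
          - (1 / (i : ℝ)) * ∑ k ∈ Finset.Icc 1 (i - 1), H k / (k : ℝ) ^ 2)
        + (P2 / i - H i / (i : ℝ) ^ 2)) / ((i : ℝ) + 1)
        = P3 / (i + 1 : ℕ) - P2 / ((i + 1 : ℕ) : ℝ) ^ 2 + P2 * H (i + 1) / (i + 1 : ℕ)
          - (1 / ((i + 1 : ℕ) : ℝ)) * ∑ k ∈ Finset.Icc 1 ((i + 1) - 1), H k / (k : ℝ) ^ 2 := by
      have e : (i + 1) - 1 = i := rfl
      rw [e, hs, hH]
      push_cast
      have h4 : ((i : ℝ) + 1) ≠ 0 := by positivity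
      field_simp
      ring
    rwa [hval] at h

lemma real_shift (p : ℕ) (hp : 1 < p) :
    ∑' n : ℕ, 1 / ((n : ℝ)) ^ p = ∑' n : ℕ, 1 / ((n : ℝ) + 1) ^ p := by
  rw [Summable.tsum_eq_zero_add ((Real.summable_one_div_nat_pow).mpr hp)]
  have h0 : 1 / ((0 : ℕ) : ℝ) ^ p = 0 := by
    simp [zero_pow (by omega : p ≠ 0)]
  rw [h0, zero_add]
  exact tsum_congr fun n => by push_cast; ring_nf

lemma zeta_eq (p : ℕ) (hp : 1 < p) :
    riemannZeta (p : ℂ) = ((∑' n : ℕ, 1 / ((n : ℝ) + 1) ^ p : ℝ) : ℂ) := by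
  rw [zeta_nat_eq_tsum_of_gt_one hp, ← real_shift p hp, Complex.ofReal_tsum]
  exact tsum_congr fun n => by push_cast; ring_nf

lemma zeta2' : riemannZeta 2 = ((P2 : ℝ) : ℂ) := by
  have := zeta_eq 2 one_lt_two
  rw [show (((2 : ℕ) : ℂ)) = (2 : ℂ) by norm_num] at this
  rw [this, P2]

lemma zeta3' : riemannZeta 3 = ((P3 : ℝ) : ℂ) := by
  have := zeta_eq 3 (by norm_num)
  rw [show (((3 : ℕ) : ℂ)) = (3 : ℂ) by norm_num] at this
  rw [this, P3]

theorem stmt15 (i : ℕ) (hi : 0 < i) : ∑' k : ℕ, ((Hp 2 (k+1) / (((k : ℝ) + 1) * ((i : ℝ) + ((k : ℝ) + 1))) : ℝ) : ℂ) = riemannZeta 3 / (i : ℂ) - riemannZeta 2 / (i : ℂ)^2 + riemannZeta 2 * ((H i : ℝ) : ℂ) / (i : ℂ) - (1 / (i : ℂ)) * ((∑ k ∈ Finset.Icc 1 (i-1), H k / (k : ℝ)^2 : ℝ) : ℂ) := by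
  have hmain := hasSum_main i hi
  have hfun : (fun k : ℕ => Hp 2 (k + 1) / (((k : ℝ) + 1) * ((k : ℝ) + 1 + i)))
      = fun k : ℕ => Hp 2 (k + 1) / (((k : ℝ) + 1) * ((i : ℝ) + ((k : ℝ) + 1))) := by
    funext k; ring_nf
  rw [hfun] at hmain
  rw [← Complex.ofReal_tsum, hmain.tsum_eq, zeta2', zeta3']
  have hi' : ((i : ℂ)) ≠ 0 := by
    exact_mod_cast Nat.cast_ne_zero.mpr hi.ne'
  push_cast
  ring
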